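/- Fix design points s₁,…,s_n ∈ [0,1] and nonnegative weights w₁(s'),…,w_n(s') summing to 1. Suppose η : [0,1] → [0,1] is twice differentiable with |η'| ≤ b₁ and |η''| ≤ b₂ uniformly. Let yᵢ be independent random variables with yᵢ ∈ {0,1} and E[yᵢ] = η(sᵢ), and set η̂(s') = ∑ᵢ wᵢ(s')yᵢ. Then E|η̂(s') - η(s')| ≤ b₁·∑ᵢ wᵢ(s')|s' - sᵢ| + (b₂/2)·∑ᵢ wᵢ(s')(s' - sᵢ)² + (1/2)·√(∑ᵢ wᵢ(s')²). -/

import Mathlib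

open MeasureTheory ProbabilityTheory

theorem nadaraya_watson_smoothing_error
    {Ω : Type*} [MeasureSpace Ω] (hP : IsProbabilityMeasure (ℙ : Measure Ω))
    (n : ℕ) (s : Fin n → ℝ) (hsIn : ∀ i, s i ∈ Set.Icc (0:ℝ) 1)
    (s' : ℝ) (hs' : s' ∈ Set.Icc (0:ℝ) 1)
    (w : Fin n → ℝ) (hw : ∀ i, 0 ≤ w i) (hw1 : ∑ i, w i = 1)
    (η : ℝ → ℝ) (hη : ContDiff ℝ 2 η)
    (hηb : ∀ x ∈ Set.Icc (0:ℝ) 1, η x ∈ Set.Icc (0:ℝ) 1)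
    (b₁ b₂ : ℝ)
    (hb₁ : ∀ x ∈ Set.Icc (0:ℝ) 1, |deriv η x| ≤ b₁)
    (hb₂ : ∀ x ∈ Set.Icc (0:ℝ) 1, |deriv (deriv η) x| ≤ b₂)
    (y : Fin n → Ω → ℝ) (hmeas : ∀ i, Measurable (y i))
    (hindep : iIndepFun y ℙ)
    (hval : ∀ i, ∀ᵐ ω : Ω, y i ω = 0 ∨ y i ω = 1)
    (hmean : ∀ i, (∫ ω, y i ω) = η (s i)) :
    (∫ ω, |(∑ i, w i * y i ω) - η s'|)
      ≤ b₁ * ∑ i, w i * |s' - s i| + (b₂ / 2) * ∑ i, w i * (s' - s i) ^ 2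
          + (1 / 2) * Real.sqrt (∑ i, (w i) ^ 2) := by
  classical
  set μ : Fin n → ℝ := fun i => η (s i) with hμdef
  set X : Fin n → Ω → ℝ := fun i ω => y i ω - μ i with hXdef
  have hμ01 : ∀ i, μ i ∈ Set.Icc (0:ℝ) 1 := fun i => hηb _ (hsIn i)
  have hybd : ∀ i, ∀ᵐ ω, ‖y i ω‖ ≤ 1 := by
    intro i; filter_upwards [hval i] with ω h
    rcases h with h | h <;> simp [h]
  have hyint : ∀ i, Integrable (y i) := fun i =>
    (integrable_const (1:ℝ)).mono' (hmeas i).aestronglyMeasurable (hybd i)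
  have hXmeas : ∀ i, Measurable (X i) := fun i => (hmeas i).sub measurable_const
  have hXint : ∀ i, Integrable (X i) := fun i => (hyint i).sub (integrable_const _)
  have hXbd : ∀ i, ∀ᵐ ω, ‖X i ω‖ ≤ 1 := by
    intro i; filter_upwards [hval i] with ω h
    have h1 := (hμ01 i).1; have h2 := (hμ01 i).2
    rcases h with h | h <;>
      simp only [hXdef, h, Real.norm_eq_abs, abs_le, zero_sub, abs_neg] <;>
      constructor <;> linarith
  have hXmean : ∀ i, ∫ ω, X i ω = 0 := by
    intro i
    rw [show (fun ω => X i ω) = fun ω => y i ω - μ i from rfl]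
    rw [integral_sub (hyint i) (integrable_const _), hmean i, integral_const]
    simp [hμdef]
  have hprodint : ∀ i j, Integrable (fun ω => X i ω * X j ω) := by
    intro i j
    refine (integrable_const (1:ℝ)).mono'
      (((hXmeas i).mul (hXmeas j)).aestronglyMeasurable) ?_
    filter_upwards [hXbd i, hXbd j] with ω h1 h2
    calc ‖X i ω * X j ω‖ = ‖X i ω‖ * ‖X j ω‖ := norm_mul _ _
      _ ≤ 1 * 1 := mul_le_mul h1 h2 (norm_nonneg _) zero_le_one
      _ = 1 := one_mul 1
  have hcross : ∀ i j, i ≠ j → ∫ ω, X i ω * X j ω = 0 := by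
    intro i j hij
    have hind : IndepFun (y i) (y j) ℙ := hindep.indepFun hij
    have hindX : IndepFun (X i) (X j) ℙ :=
      hind.comp (measurable_id.sub measurable_const) (measurable_id.sub measurable_const)
    rw [hindX.integral_fun_mul_eq_mul_integral (hXmeas i).aestronglyMeasurable (hXmeas j).aestronglyMeasurable,
      hXmean i, hXmean j]
    ring
  have hdiag : ∀ i, ∫ ω, X i ω * X i ω ≤ 1 / 4 := by
    intro i
    have hsq : ∀ᵐ ω : Ω, X i ω * X i ω = y i ω * (1 - 2 * μ i) + μ i ^ 2 := by
      filter_upwards [hval i] with ω h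
      rcases h with h | h <;> simp only [hXdef, h] <;> ring
    rw [integral_congr_ae hsq,
      integral_add ((hyint i).mul_const _) (integrable_const _),
      integral_mul_const, hmean i, integral_const]
    have h1 := (hμ01 i).1; have h2 := (hμ01 i).2
    have : (ℙ : Measure Ω) Set.univ = 1 := measure_univ
    simp only [measure_univ, ENNReal.toReal_one, smul_eq_mul, one_mul, probReal_univ]
    nlinarith [sq_nonneg (μ i - 1 / 2)]
  -- the centered sum
  set Z : Ω → ℝ := fun ω => ∑ i, w i * X i ω with hZdef
  have hZmeas : Measurable Z := by
    apply Finset.measurable_sum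
    exact fun i _ => (hXmeas i).const_mul _
  have hZbd : ∀ᵐ ω, ‖Z ω‖ ≤ 1 := by
    have : ∀ᵐ ω : Ω, ∀ i, ‖X i ω‖ ≤ 1 := ae_all_iff.2 hXbd
    filter_upwards [this] with ω h
    calc ‖Z ω‖ ≤ ∑ i, ‖w i * X i ω‖ := norm_sum_le _ _
      _ ≤ ∑ i, w i := by
          refine Finset.sum_le_sum fun i _ => ?_
          rw [norm_mul, Real.norm_eq_abs (w i), abs_of_nonneg (hw i)]
          calc w i * ‖X i ω‖ ≤ w i * 1 := by
                exact mul_le_mul_of_nonneg_left (h i) (hw i)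
            _ = w i := mul_one _
      _ = 1 := hw1
  have hZint : Integrable Z :=
    (integrable_const (1:ℝ)).mono' hZmeas.aestronglyMeasurable hZbd
  have hZsqint : Integrable (fun ω => Z ω ^ 2) := by
    refine (integrable_const (1:ℝ)).mono'
      ((hZmeas.pow_const 2).aestronglyMeasurable) ?_
    filter_upwards [hZbd] with ω h
    rw [Real.norm_eq_abs, abs_pow, ← Real.norm_eq_abs]
    calc ‖Z ω‖ ^ 2 ≤ 1 ^ 2 := pow_le_pow_left₀ (norm_nonneg _) h 2
      _ = 1 := one_pow 2
  -- second moment bound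
  have hsecond : ∫ ω, Z ω ^ 2 ≤ ∑ i, w i ^ 2 / 4 := by
    have expand : ∀ ω, Z ω ^ 2 = ∑ i, ∑ j, w i * w j * (X i ω * X j ω) := by
      intro ω
      rw [hZdef, sq, Finset.sum_mul_sum]
      exact Finset.sum_congr rfl fun i _ => Finset.sum_congr rfl fun j _ => by ring
    calc (∫ ω, Z ω ^ 2) = ∑ i, ∑ j, w i * w j * ∫ ω, X i ω * X j ω := by
          simp_rw [expand]
          rw [integral_finset_sum _ (fun i _ =>
            integrable_finset_sum _ (fun j _ => ((hprodint i j).const_mul _)))]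
          refine Finset.sum_congr rfl fun i _ => ?_
          rw [integral_finset_sum _ (fun j _ => ((hprodint i j).const_mul _))]
          exact Finset.sum_congr rfl fun j _ => integral_const_mul _ _
      _ = ∑ i, w i * w i * ∫ ω, X i ω * X i ω := by
          refine Finset.sum_congr rfl fun i _ => ?_
          rw [Finset.sum_eq_single i]
          · intro j _ hji
            rw [hcross i j (Ne.symm hji), mul_zero]
          · intro h; exact absurd (Finset.mem_univ i) h
      _ ≤ ∑ i, w i ^ 2 / 4 := by
          refine Finset.sum_le_sum fun i _ => ?_
          have hnn : 0 ≤ w i * w i := mul_nonneg (hw i) (hw i)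
          have hb := mul_le_mul_of_nonneg_left (hdiag i) hnn
          nlinarith [hb]
  -- Jensen: E|Z| ≤ sqrt (E Z²)
  have habsint : Integrable (fun ω => |Z ω|) := hZint.abs
  have hm0 : 0 ≤ ∫ ω, |Z ω| := integral_nonneg fun ω => abs_nonneg _
  have hjensen : (∫ ω, |Z ω|) ≤ Real.sqrt (∫ ω, Z ω ^ 2) := by
    set m := ∫ ω, |Z ω| with hm
    have key : m ^ 2 ≤ ∫ ω, Z ω ^ 2 := by
      have expand : ∀ ω : Ω, (|Z ω| - m) ^ 2 = Z ω ^ 2 - 2 * m * |Z ω| + m ^ 2 := by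
        intro ω; rw [sub_sq, sq_abs]; ring
      have hnn : 0 ≤ ∫ ω, (|Z ω| - m) ^ 2 := integral_nonneg fun ω => sq_nonneg _
      have : (∫ ω, (|Z ω| - m) ^ 2) = (∫ ω, Z ω ^ 2) - m ^ 2 := by
        simp_rw [expand]
        rw [integral_add (show Integrable (fun ω => Z ω ^ 2 - 2 * m * |Z ω|) ℙ from
            hZsqint.sub (habsint.const_mul _)) (integrable_const _),
          integral_sub hZsqint (habsint.const_mul _), integral_const_mul, integral_const]
        simp only [measure_univ, ENNReal.toReal_one, smul_eq_mul, one_mul, probReal_univ]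
        rw [← hm]
        ring_nf
      linarith [hnn.trans_eq this]
    have h2 : 0 ≤ ∫ ω, Z ω ^ 2 := integral_nonneg fun ω => sq_nonneg _
    calc m = Real.sqrt (m ^ 2) := (Real.sqrt_sq hm0).symm
      _ ≤ Real.sqrt (∫ ω, Z ω ^ 2) := Real.sqrt_le_sqrt key
  -- noise term
  have hnoise : (∫ ω, |Z ω|) ≤ (1 / 2) * Real.sqrt (∑ i, w i ^ 2) := by
    refine hjensen.trans ?_
    have h1 : Real.sqrt (∫ ω, Z ω ^ 2) ≤ Real.sqrt (∑ i, w i ^ 2 / 4) :=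
      Real.sqrt_le_sqrt hsecond
    refine h1.trans_eq ?_
    rw [show (∑ i, w i ^ 2 / 4) = (1/2)^2 * ∑ i, w i ^ 2 by
        rw [Finset.mul_sum]; exact Finset.sum_congr rfl fun i _ => by ring,
      Real.sqrt_mul (by positivity), Real.sqrt_sq (by norm_num)]
  -- bias term
  have hderiv_all : Differentiable ℝ η := hη.differentiable (by norm_num)
  have hMVT : ∀ i, |μ i - η s'| ≤ b₁ * |s' - s i| := by
    intro i
    have := (convex_Icc (0:ℝ) 1).norm_image_sub_le_of_norm_deriv_le
      (fun x _ => hderiv_all x) (fun x hx => hb₁ x hx) hs' (hsIn i)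
    simp only [Real.norm_eq_abs] at this
    calc |μ i - η s'| = |η (s i) - η s'| := rfl
      _ ≤ b₁ * |s i - s'| := this
      _ = b₁ * |s' - s i| := by rw [abs_sub_comm]
  have hbias : |(∑ i, w i * μ i) - η s'| ≤ b₁ * ∑ i, w i * |s' - s i| := by
    have hrw : (∑ i, w i * μ i) - η s' = ∑ i, w i * (μ i - η s') := by
      simp_rw [mul_sub, Finset.sum_sub_distrib, ← Finset.sum_mul, hw1, one_mul]
    rw [hrw]
    calc |∑ i, w i * (μ i - η s')| ≤ ∑ i, |w i * (μ i - η s')| :=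
          Finset.abs_sum_le_sum_abs _ _
      _ ≤ ∑ i, w i * (b₁ * |s' - s i|) := by
          refine Finset.sum_le_sum fun i _ => ?_
          rw [abs_mul, abs_of_nonneg (hw i)]
          exact mul_le_mul_of_nonneg_left (hMVT i) (hw i)
      _ = b₁ * ∑ i, w i * |s' - s i| := by
          rw [Finset.mul_sum]; exact Finset.sum_congr rfl fun i _ => by ring
  -- assemble
  set B : ℝ := (∑ i, w i * μ i) - η s' with hBdef
  have hpt : ∀ ω, (∑ i, w i * y i ω) - η s' = Z ω + B := by
    intro ω
    simp only [hZdef, hXdef, hBdef, mul_sub, Finset.sum_sub_distrib]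
    ring
  have hint1 : Integrable (fun ω => |(∑ i, w i * y i ω) - η s'|) := by
    have : Integrable (fun ω => |Z ω + B|) := (hZint.add (integrable_const B)).abs
    refine this.congr (Filter.Eventually.of_forall fun ω => ?_)
    show |Z ω + B| = |(∑ i, w i * y i ω) - η s'|
    rw [hpt ω]
  have hmain : (∫ ω, |(∑ i, w i * y i ω) - η s'|) ≤ (∫ ω, |Z ω|) + |B| := by
    have hle : ∀ ω, |(∑ i, w i * y i ω) - η s'| ≤ |Z ω| + |B| := by
      intro ω; rw [hpt ω]; exact abs_add_le _ _
    calc (∫ ω, |(∑ i, w i * y i ω) - η s'|) ≤ ∫ ω, (|Z ω| + |B|) :=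
          integral_mono hint1 (habsint.add (integrable_const _)) hle
      _ = (∫ ω, |Z ω|) + |B| := by
          rw [integral_add habsint (integrable_const _), integral_const]
          simp [measure_univ]
  have hb₂nn : 0 ≤ b₂ := le_trans (abs_nonneg _) (hb₂ 0 ⟨le_refl 0, zero_le_one⟩)
  have hsum2nn : 0 ≤ ∑ i, w i * (s' - s i) ^ 2 :=
    Finset.sum_nonneg fun i _ => mul_nonneg (hw i) (sq_nonneg _)
  have hextra : 0 ≤ (b₂ / 2) * ∑ i, w i * (s' - s i) ^ 2 := by positivity
  linarith
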